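/- Let (G,w) be a weighted graph. For every integral homology class a ∈ H_1(G,ℤ) there exist oriented simple circuits {C_s}_{s∈S} (not uniquely determined) such that a = Σ_{s∈S} [C_s] and ‖a‖_w = Σ_{s∈S} ‖C_s‖_w. -/

import Mathlib

noncomputable section

/-- A finite connected multigraph with a fixed orientation of each edge. -/
structure Multigraph where
  V : Type
  E : Type
  [finV : Fintype V]
  [finE : Fintype E]
  [decV : DecidableEq V]
  [decE : DecidableEq E]
  src : E → V
  tgt : E → V
  connected : ∀ u v : V, Relation.ReflTransGen
    (fun a b => ∃ e, (src e = a ∧ tgt e = b) ∨ (src e = b ∧ tgt e = a)) u v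

attribute [instance] Multigraph.finV Multigraph.finE Multigraph.decV Multigraph.decE

namespace Multigraph

variable (G : Multigraph)

/-- The simplicial boundary map `∂ : C(G,ℝ) = ℝ^E → ℝ^V`. -/
def boundary : (G.E → ℝ) →ₗ[ℝ] (G.V → ℝ) :=
  LinearMap.pi fun v =>
    ∑ e : G.E, (((if G.tgt e = v then (1 : ℝ) else 0) - (if G.src e = v then 1 else 0)) •
      LinearMap.proj e)

/-- The first real homology of `G`, as the subspace of 1-cycles in `ℝ^E`. -/
def H1 : Submodule ℝ (G.E → ℝ) := LinearMap.ker G.boundary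

/-- The weighted ℓ¹-norm on chains; its restriction to `H1` is the stable norm. -/
def wnorm (w : G.E → ℝ) (u : G.E → ℝ) : ℝ := ∑ e : G.E, w e * |u e|

/-- The stable ball: unit ball of the stable norm in `H_1(G,ℝ)`. -/
def stableBall (w : G.E → ℝ) : Set (G.E → ℝ) :=
  {u | u ∈ G.H1 ∧ G.wnorm w u ≤ 1}

/-- An oriented simple circuit of `G`: a closed oriented edge walk visiting each of its
vertices exactly once (starting point immaterial, encoded by indexing over `ZMod n`). -/
structure Circuit (G : Multigraph) where
  n : ℕ
  npos : 0 < n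
  vert : ZMod n → G.V
  edge : ZMod n → G.E
  dir : ZMod n → Bool
  vertInj : Function.Injective vert
  edgeInj : Function.Injective edge
  incid : ∀ i, (dir i = true ∧ G.src (edge i) = vert i ∧ G.tgt (edge i) = vert (i + 1)) ∨
      (dir i = false ∧ G.src (edge i) = vert (i + 1) ∧ G.tgt (edge i) = vert i)

/-- The 1-chain associated to an oriented simple circuit. -/
def Circuit.chain {G : Multigraph} (C : Circuit G) : G.E → ℝ := fun e =>
  haveI : NeZero C.n := ⟨C.npos.ne'⟩
  ∑ i : ZMod C.n, if C.edge i = e then (if C.dir i then (1 : ℝ) else -1) else 0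

/-- The `w`-length of an oriented simple circuit. -/
def Circuit.wlen {G : Multigraph} (C : Circuit G) (w : G.E → ℝ) : ℝ :=
  haveI : NeZero C.n := ⟨C.npos.ne'⟩
  ∑ i : ZMod C.n, w (C.edge i)

end Multigraph

namespace Multigraph
variable {G : Multigraph}

lemma boundary_apply (u : G.E → ℝ) (v : G.V) :
    G.boundary u v = ∑ e : G.E,
      ((if G.tgt e = v then (1 : ℝ) else 0) - (if G.src e = v then 1 else 0)) * u e := by
  simp [Multigraph.boundary, LinearMap.pi_apply, LinearMap.sum_apply, LinearMap.smul_apply,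
    smul_eq_mul]

/-- Integer version of the chain of a circuit. -/
def Circuit.ichain (C : Circuit G) : G.E → ℤ := fun e =>
  haveI : NeZero C.n := ⟨C.npos.ne'⟩
  ∑ i : ZMod C.n, if C.edge i = e then (if C.dir i then (1 : ℤ) else -1) else 0

lemma Circuit.chain_eq_cast (C : Circuit G) (e : G.E) :
    C.chain e = ((C.ichain e : ℤ) : ℝ) := by
  haveI : NeZero C.n := ⟨C.npos.ne'⟩
  simp only [Circuit.chain, Circuit.ichain]
  push_cast
  rfl

lemma Circuit.ichain_edge (C : Circuit G) [NeZero C.n] (k : ZMod C.n) :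
    C.ichain (C.edge k) = if C.dir k then 1 else -1 := by
  rw [Circuit.ichain, Finset.sum_eq_single k]
  · simp
  · intro i _ hik
    rw [if_neg (fun h => hik (C.edgeInj h))]
  · intro h; exact absurd (Finset.mem_univ k) h

lemma Circuit.ichain_notin (C : Circuit G) (e : G.E) (he : ∀ k, C.edge k ≠ e) :
    C.ichain e = 0 := by
  haveI : NeZero C.n := ⟨C.npos.ne'⟩
  rw [Circuit.ichain]
  exact Finset.sum_eq_zero fun i _ => if_neg (he i)

lemma Circuit.boundary_chain (C : Circuit G) : G.boundary C.chain = 0 := by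
  haveI : NeZero C.n := ⟨C.npos.ne'⟩
  funext v
  rw [boundary_apply]
  simp only [Circuit.chain, Finset.mul_sum, Pi.zero_apply]
  rw [Finset.sum_comm]
  have key : ∀ i : ZMod C.n,
      (∑ e : G.E, ((if G.tgt e = v then (1:ℝ) else 0) - (if G.src e = v then 1 else 0)) *
        (if C.edge i = e then (if C.dir i then (1:ℝ) else -1) else 0)) =
      (if C.vert (i+1) = v then (1:ℝ) else 0) - (if C.vert i = v then 1 else 0) := by
    intro i
    rw [Finset.sum_eq_single (C.edge i)]
    · rcases C.incid i with ⟨hd, hs, ht⟩ | ⟨hd, hs, ht⟩ <;>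
        simp [hd, hs, ht]
    · intro e _ hne; rw [if_neg (Ne.symm hne), mul_zero]
    · intro h; exact absurd (Finset.mem_univ _) h
  rw [Finset.sum_congr rfl fun i _ => key i, Finset.sum_sub_distrib]
  have : (∑ i : ZMod C.n, if C.vert (i+1) = v then (1:ℝ) else 0)
      = ∑ i : ZMod C.n, if C.vert i = v then (1:ℝ) else 0 := by
    exact Fintype.sum_equiv (Equiv.addRight (1 : ZMod C.n))
      (fun i => if C.vert (i+1) = v then (1:ℝ) else 0)
      (fun i => if C.vert i = v then (1:ℝ) else 0) (fun i => by simp; rfl)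
  rw [this, sub_self]

lemma conservation (b : G.E → ℤ) (hb : G.boundary (fun e => ((b e : ℤ) : ℝ)) = 0) (v : G.V) :
    ∑ e : G.E, ((if G.tgt e = v then (1 : ℤ) else 0) - (if G.src e = v then 1 else 0)) * b e
      = 0 := by
  have h := congrFun hb v
  rw [boundary_apply] at h
  simp only [Pi.zero_apply] at h
  have : ((∑ e : G.E, ((if G.tgt e = v then (1 : ℤ) else 0) - (if G.src e = v then 1 else 0))
      * b e : ℤ) : ℝ) = 0 := by
    rw [← h]
    push_cast [apply_ite (fun z : ℤ => (z : ℝ))]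
    rfl
  exact_mod_cast this

lemma exists_circuit (b : G.E → ℤ) (hb : G.boundary (fun e => ((b e : ℤ) : ℝ)) = 0)
    (e0 : G.E) (he0 : b e0 ≠ 0) :
    ∃ C : Circuit G,
      (∀ e, C.ichain e = 0 ∨ (1 ≤ b e ∧ C.ichain e = 1) ∨ (b e ≤ -1 ∧ C.ichain e = -1)) ∧
      (∃ e, C.ichain e ≠ 0) := by
  classical
  -- `P v` : some active edge points into `v`
  set P : G.V → Prop := fun v => ∃ e, (0 < b e ∧ G.tgt e = v) ∨ (b e < 0 ∧ G.src e = v) with hP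
  have step : ∀ v, P v → ∃ e u,
      ((0 < b e ∧ G.src e = v ∧ G.tgt e = u) ∨ (b e < 0 ∧ G.tgt e = v ∧ G.src e = u)) ∧ P u := by
    intro v hv
    have out : ∃ e, (0 < b e ∧ G.src e = v) ∨ (b e < 0 ∧ G.tgt e = v) := by
      by_contra hout
      push_neg at hout
      obtain ⟨e1, he1⟩ := hv
      have hnn : ∀ e ∈ Finset.univ, (0 : ℤ) ≤
          ((if G.tgt e = v then (1 : ℤ) else 0) - (if G.src e = v then 1 else 0)) * b e := by
        intro e _
        rcases lt_trichotomy (b e) 0 with hbe | hbe | hbe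
        · have := (hout e).2 hbe
          simp only [if_neg this]
          rcases eq_or_ne (G.src e) v with hs | hs
          · simp only [if_pos hs]; nlinarith
          · simp [hs]
        · simp [hbe]
        · have := (hout e).1 hbe
          simp only [if_neg this]
          rcases eq_or_ne (G.tgt e) v with hs | hs
          · simp only [if_pos hs]; nlinarith
          · simp [hs]
      have hpos : (0 : ℤ) <
          ∑ e : G.E, ((if G.tgt e = v then (1 : ℤ) else 0) - (if G.src e = v then 1 else 0))
            * b e := by
        refine Finset.sum_pos' hnn ⟨e1, Finset.mem_univ _, ?_⟩
        rcases he1 with ⟨hb1, ht1⟩ | ⟨hb1, hs1⟩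
        · have hs : G.src e1 ≠ v := (hout e1).1 hb1
          simp only [if_pos ht1, if_neg hs]; nlinarith
        · have ht : G.tgt e1 ≠ v := (hout e1).2 hb1
          simp only [if_pos hs1, if_neg ht]; nlinarith
      rw [conservation b hb v] at hpos
      exact lt_irrefl 0 hpos
    obtain ⟨e, he⟩ := out
    rcases he with ⟨hbe, hse⟩ | ⟨hbe, hte⟩
    · exact ⟨e, G.tgt e, Or.inl ⟨hbe, hse, rfl⟩, ⟨e, Or.inl ⟨hbe, rfl⟩⟩⟩
    · exact ⟨e, G.src e, Or.inr ⟨hbe, hte, rfl⟩, ⟨e, Or.inr ⟨hbe, rfl⟩⟩⟩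
  -- starting vertex
  have hstart : ∃ v, P v := by
    rcases lt_or_gt_of_ne he0 with h | h
    · exact ⟨G.src e0, e0, Or.inr ⟨h, rfl⟩⟩
    · exact ⟨G.tgt e0, e0, Or.inl ⟨h, rfl⟩⟩
  obtain ⟨v0, hv0⟩ := hstart
  -- choice functions
  choose ed nxt hspec hPnxt using fun v : {v // P v} => step v.1 v.2
  set f : {v // P v} → {v // P v} := fun v => ⟨nxt v, hPnxt v⟩ with hf
  set vs : ℕ → {v // P v} := fun k => f^[k] ⟨v0, hv0⟩ with hvs
  have hsucc : ∀ m : ℕ, vs (m + 1) = f (vs m) := fun m => Function.iterate_succ_apply' f m _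
  -- pigeonhole
  obtain ⟨x, y, hxy, hvxy⟩ := Finite.exists_ne_map_eq_of_infinite vs
  have hQex : ∃ m, ∃ l, l < m ∧ vs l = vs m := by
    rcases hxy.lt_or_gt with h | h
    · exact ⟨y, x, h, hvxy⟩
    · exact ⟨x, y, h, hvxy.symm⟩
  set j0 := Nat.find hQex with hj0
  obtain ⟨i0, hi0lt, hi0eq⟩ := Nat.find_spec hQex
  have hseg : ∀ p q, p < q → q < j0 → vs p ≠ vs q := by
    intro p q hpq hq hpqeq
    exact Nat.find_min hQex hq ⟨p, hpq, hpqeq⟩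
  set n := j0 - i0 with hn
  have hnpos : 0 < n := Nat.sub_pos_of_lt hi0lt
  haveI : NeZero n := ⟨hnpos.ne'⟩
  have hj0eq : j0 = i0 + n := by omega
  -- circuit data
  set vert : ZMod n → G.V := fun k => (vs (i0 + k.val)).1 with hvert
  set edge : ZMod n → G.E := fun k => ed (vs (i0 + k.val)) with hedge
  set dir : ZMod n → Bool := fun k => decide (0 < b (edge k)) with hdir
  have hvallt : ∀ k : ZMod n, k.val < n := fun k => ZMod.val_lt k
  have hvaladd : ∀ k : ZMod n, (k + 1).val = (k.val + 1) % n := by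
    intro k
    rw [ZMod.val_add, ZMod.val_one_eq_one_mod]
    simp [Nat.add_mod]
  have hshift : ∀ k : ZMod n, vs (i0 + k.val + 1) = vs (i0 + (k + 1).val) := by
    intro k
    rcases eq_or_lt_of_le (Nat.succ_le_of_lt (hvallt k)) with h | h
    · -- k.val + 1 = n : wraps
      have h1 : (k + 1).val = 0 := by
        rw [hvaladd k, show k.val + 1 = n from h, Nat.mod_self]
      rw [h1]
      have : i0 + k.val + 1 = j0 := by omega
      rw [this, Nat.add_zero, hi0eq]
    · have h1 : (k + 1).val = k.val + 1 := by rw [hvaladd k, Nat.mod_eq_of_lt h]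
      rw [h1, Nat.add_assoc]
  have hstep' : ∀ k : ZMod n,
      (0 < b (edge k) ∧ G.src (edge k) = vert k ∧ G.tgt (edge k) = vert (k + 1)) ∨
      (b (edge k) < 0 ∧ G.tgt (edge k) = vert k ∧ G.src (edge k) = vert (k + 1)) := by
    intro k
    have h1 := hspec (vs (i0 + k.val))
    have h2 : nxt (vs (i0 + k.val)) = vert (k + 1) := by
      have : (f (vs (i0 + k.val))).1 = nxt (vs (i0 + k.val)) := rfl
      rw [← this, ← hsucc (i0 + k.val), hshift k]
    rw [h2] at h1
    rcases h1 with ⟨h, hs, ht⟩ | ⟨h, ht, hs⟩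
    · exact Or.inl ⟨h, hs, ht⟩
    · exact Or.inr ⟨h, ht, hs⟩
  have vertInj : Function.Injective vert := by
    intro k k' hkk'
    have : vs (i0 + k.val) = vs (i0 + k'.val) := Subtype.ext hkk'
    by_contra hne
    have hvne : k.val ≠ k'.val := fun h => hne (ZMod.val_injective n h)
    rcases hvne.lt_or_gt with h | h
    · exact hseg (i0 + k.val) (i0 + k'.val) (by omega) (by have := hvallt k'; omega) this
    · exact hseg (i0 + k'.val) (i0 + k.val) (by omega) (by have := hvallt k; omega) this.symm
  have edgeInj : Function.Injective edge := by
    intro k k' hkk'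
    rcases hstep' k with ⟨h, hs, _⟩ | ⟨h, hs, _⟩ <;>
      rcases hstep' k' with ⟨h', hs', _⟩ | ⟨h', hs', _⟩
    · exact vertInj (by rw [← hs, ← hs', hkk'])
    · exact absurd (hkk' ▸ h) (by omega)
    · exact absurd (hkk' ▸ h) (by omega)
    · exact vertInj (by rw [← hs, ← hs', hkk'])
  have incid : ∀ k : ZMod n,
      (dir k = true ∧ G.src (edge k) = vert k ∧ G.tgt (edge k) = vert (k + 1)) ∨
      (dir k = false ∧ G.src (edge k) = vert (k + 1) ∧ G.tgt (edge k) = vert k) := by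
    intro k
    rcases hstep' k with ⟨h, hs, ht⟩ | ⟨h, ht, hs⟩
    · exact Or.inl ⟨by simp [hdir, h], hs, ht⟩
    · exact Or.inr ⟨by simp [hdir]; omega, hs, ht⟩
  refine ⟨⟨n, hnpos, vert, edge, dir, vertInj, edgeInj, incid⟩, ?_, ?_⟩
  · intro e
    by_cases he : ∃ k : ZMod n, edge k = e
    · obtain ⟨k, rfl⟩ := he
      have hv := Circuit.ichain_edge ⟨n, hnpos, vert, edge, dir, vertInj, edgeInj, incid⟩ k
      rcases hstep' k with ⟨h, _, _⟩ | ⟨h, _, _⟩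
      · refine Or.inr (Or.inl ⟨by omega, ?_⟩)
        rw [hv, if_pos (by simp [hdir, h])]
      · refine Or.inr (Or.inr ⟨by omega, ?_⟩)
        rw [hv, if_neg (by simp [hdir]; omega)]
    · push_neg at he
      exact Or.inl (Circuit.ichain_notin _ e he)
  · refine ⟨edge 0, ?_⟩
    have hv := Circuit.ichain_edge ⟨n, hnpos, vert, edge, dir, vertInj, edgeInj, incid⟩ 0
    rw [hv]
    split <;> simp

end Multigraph

namespace Multigraph
variable {G : Multigraph}

lemma decomp (G : Multigraph) (w : G.E → ℝ) : ∀ (N : ℕ) (b : G.E → ℤ),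
    (∑ e : G.E, (b e).natAbs) ≤ N → G.boundary (fun e => ((b e : ℤ) : ℝ)) = 0 →
    ∃ (S : ℕ) (C : Fin S → Circuit G),
      (∀ e, ((b e : ℤ) : ℝ) = ∑ s : Fin S, (C s).chain e) ∧
      G.wnorm w (fun e => ((b e : ℤ) : ℝ)) = ∑ s : Fin S, G.wnorm w (C s).chain := by
  intro N
  induction N with
  | zero =>
    intro b hle _
    have hb0 : ∀ e, b e = 0 := by
      intro e
      have := Finset.sum_eq_zero_iff_of_nonneg (fun e _ => Nat.zero_le _) |>.1
        (Nat.le_zero.1 hle) e (Finset.mem_univ e)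
      omega
    refine ⟨0, Fin.elim0, fun e => by simp [hb0 e], ?_⟩
    simp [Multigraph.wnorm, hb0]
  | succ N ih =>
    intro b hle hb
    by_cases hz : ∀ e, b e = 0
    · refine ⟨0, Fin.elim0, fun e => by simp [hz e], ?_⟩
      simp [Multigraph.wnorm, hz]
    · push_neg at hz
      obtain ⟨e0, he0⟩ := hz
      obtain ⟨C0, hC0, e1, he1⟩ := exists_circuit b hb e0 he0
      set b' : G.E → ℤ := fun e => b e - C0.ichain e with hb'
      have hper : ∀ e, (b e).natAbs = (C0.ichain e).natAbs + (b' e).natAbs := by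
        intro e
        rcases hC0 e with h | ⟨h1, h2⟩ | ⟨h1, h2⟩ <;> simp only [hb'] <;> omega
      have hbd' : G.boundary (fun e => ((b' e : ℤ) : ℝ)) = 0 := by
        have : (fun e => ((b' e : ℤ) : ℝ)) =
            (fun e => ((b e : ℤ) : ℝ)) - C0.chain := by
          funext e
          simp [hb', Circuit.chain_eq_cast, Pi.sub_apply]
        rw [this, map_sub, hb, Circuit.boundary_chain, sub_zero]
      have hsum' : (∑ e : G.E, (b' e).natAbs) ≤ N := by
        have h1 : (∑ e : G.E, (b e).natAbs)
            = (∑ e : G.E, (C0.ichain e).natAbs) + ∑ e : G.E, (b' e).natAbs := by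
          rw [← Finset.sum_add_distrib]
          exact Finset.sum_congr rfl fun e _ => hper e
        have h2 : 1 ≤ ∑ e : G.E, (C0.ichain e).natAbs := by
          have : 1 ≤ (C0.ichain e1).natAbs := by omega
          calc 1 ≤ (C0.ichain e1).natAbs := this
            _ ≤ _ := Finset.single_le_sum (f := fun e => (C0.ichain e).natAbs)
              (fun e _ => Nat.zero_le _) (Finset.mem_univ e1)
        omega
      obtain ⟨S, C, hCsum, hCnorm⟩ := ih b' hsum' hbd'
      refine ⟨S + 1, Fin.cons C0 C, ?_, ?_⟩
      · intro e
        rw [Fin.sum_univ_succ]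
        simp only [Fin.cons_zero, Fin.cons_succ]
        have : ((b e : ℤ) : ℝ) = C0.chain e + ((b' e : ℤ) : ℝ) := by
          rw [Circuit.chain_eq_cast]
          push_cast [hb']
          ring
        rw [this, hCsum e]
      · rw [Fin.sum_univ_succ]
        simp only [Fin.cons_zero, Fin.cons_succ]
        rw [← hCnorm]
        rw [Multigraph.wnorm, Multigraph.wnorm, Multigraph.wnorm, ← Finset.sum_add_distrib]
        refine Finset.sum_congr rfl fun e _ => ?_
        have habs : |((b e : ℤ) : ℝ)| = |C0.chain e| + |((b' e : ℤ) : ℝ)| := by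
          rw [Circuit.chain_eq_cast]
          have := hper e
          rw [← Int.cast_abs, ← Int.cast_abs, ← Int.cast_abs, ← Int.cast_add]
          congr 1
          simp only [Int.abs_eq_natAbs]
          omega
        rw [habs]
        ring

end Multigraph

open Multigraph in
/-- **Lemma A3.** For every integral homology class `a ∈ H_1(G,ℤ)` there are oriented simple
circuits `{C_s}` with `a = Σ_s [C_s]` and `‖a‖_w = Σ_s ‖C_s‖_w`. -/
theorem integral_class_decomposition_into_circuits
    (G : Multigraph) (w : G.E → ℝ) (hw : ∀ e, 0 < w e)
    (a : G.E → ℝ) (ha : a ∈ G.H1) (haint : ∀ e, ∃ z : ℤ, a e = z) :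
    ∃ (S : ℕ) (C : Fin S → Multigraph.Circuit G),
      a = ∑ s : Fin S, (C s).chain ∧
      G.wnorm w a = ∑ s : Fin S, G.wnorm w (C s).chain := by
  classical
  choose b hbe using haint
  have hab : a = fun e => ((b e : ℤ) : ℝ) := funext hbe
  have hbd : G.boundary (fun e => ((b e : ℤ) : ℝ)) = 0 := by
    rw [← hab]
    exact ha
  obtain ⟨S, C, h1, h2⟩ := decomp G w (∑ e : G.E, (b e).natAbs) b le_rfl hbd
  refine ⟨S, C, ?_, ?_⟩
  · funext e
    rw [hab]
    simpa [Finset.sum_apply] using h1 e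
  · rw [hab]
    exact h2
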